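/- For any S ⊆ H with |S| > 1 and any query tree T whose leaves contain S, there exists a question q_i with Δ_i(S, π_S)/c_i ≥ (1 − CP(π_S)) / C(T, π_S). -/

import Mathlib

open Finset

namespace ActiveLearning

variable {H A : Type*} {m : ℕ}

/-- The total mass of a weight function `v` on a finite set `S`. -/
def mass (v : H → ℝ) (S : Finset H) : ℝ := ∑ s ∈ S, v s

/-- `v` restricted to `S` and normalized. -/
noncomputable def restrict [DecidableEq H] (v : H → ℝ) (S : Finset H) : H → ℝ :=
  fun h => if h ∈ S then v h / mass v S else 0

/-- The shrinkage `Δ` of a question `qi` on `(S, v)`. -/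
noncomputable def shrink [Fintype A] [DecidableEq A] (qi : H → A)
    (S : Finset H) (v : H → ℝ) : ℝ :=
  mass v S - ∑ j : A, (mass v (S.filter fun s => qi s = j)) ^ 2 / mass v S

/-- The collision probability of a distribution `v`. -/
def CP [Fintype H] (v : H → ℝ) : ℝ := ∑ z : H, (v z) ^ 2

/-- Query trees: internal nodes are questions (indexed by `Fin m`), branches are answers,
leaves are hypotheses. -/
inductive QTree (m : ℕ) (H A : Type*) : Type _
  | leaf : H → QTree m H A
  | node : Fin m → (A → QTree m H A) → QTree m H A

/-- Follow the answers of hypothesis `h` down the tree, returning the leaf reached. -/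
def follow (q : Fin m → H → A) : QTree m H A → H → H
  | .leaf h', _ => h'
  | .node i ch, h => follow q (ch (q i h)) h

/-- The cost `c_T(h)`: sum of costs of the questions on the root-to-`h` path. -/
def pathCost (q : Fin m → H → A) (c : Fin m → ℝ) : QTree m H A → H → ℝ
  | .leaf _, _ => 0
  | .node i ch, h => c i + pathCost q c (ch (q i h)) h

/-- The leaves of `T` include `S`: every `h ∈ S` is identified by `T`. -/
def ValidOn (q : Fin m → H → A) (T : QTree m H A) (S : Finset H) : Prop :=
  ∀ h ∈ S, follow q T h = h

/-- The expected cost `C(T, v)` of a query tree `T` under weights `v`. -/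
noncomputable def treeCost [Fintype H] (q : Fin m → H → A) (c : Fin m → ℝ)
    (T : QTree m H A) (v : H → ℝ) : ℝ :=
  ∑ h : H, v h * pathCost q c T h

/-- The questions asked along the root-to-`h` path. -/
def pathQs (q : Fin m → H → A) : QTree m H A → H → List (Fin m)
  | .leaf _, _ => []
  | .node i ch, h => i :: pathQs q (ch (q i h)) h

/-- `T` is a greedy query tree for `π` on version space `S`: at every node it asks a question
maximizing the shrinkage-cost ratio and recurses on each nonempty answer class. -/
inductive IsGreedy [Fintype A] [DecidableEq A] [DecidableEq H]
    (q : Fin m → H → A) (c : Fin m → ℝ) (π : H → ℝ) :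
    QTree m H A → Finset H → Prop
  | leaf (h : H) : IsGreedy q c π (.leaf h) {h}
  | node (S : Finset H) (i : Fin m) (ch : A → QTree m H A)
      (hcard : 1 < S.card)
      (hmax : ∀ j : Fin m,
        shrink (q j) S (restrict π S) / c j ≤ shrink (q i) S (restrict π S) / c i)
      (hch : ∀ a : A, (S.filter fun s => q i s = a).Nonempty →
        IsGreedy q c π (ch a) (S.filter fun s => q i s = a)) :
      IsGreedy q c π (.node i ch) S

/-- `T` is an `ε`-approximate greedy query tree for `π` on version space `S`. -/
inductive IsApproxGreedy [Fintype A] [DecidableEq A] [DecidableEq H]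
    (ε : ℝ) (q : Fin m → H → A) (c : Fin m → ℝ) (π : H → ℝ) :
    QTree m H A → Finset H → Prop
  | leaf (h : H) : IsApproxGreedy ε q c π (.leaf h) {h}
  | node (S : Finset H) (i : Fin m) (ch : A → QTree m H A)
      (hcard : 1 < S.card)
      (happrox : ∀ j : Fin m,
        (1 - ε) * (shrink (q j) S (restrict π S) / c j) ≤
          shrink (q i) S (restrict π S) / c i)
      (hch : ∀ a : A, (S.filter fun s => q i s = a).Nonempty →
        IsApproxGreedy ε q c π (ch a) (S.filter fun s => q i s = a)) :
      IsApproxGreedy ε q c π (.node i ch) S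

/-- `T` is irreducible on version space `S`: every asked question strictly splits the
surviving set. -/
inductive Irreducible [DecidableEq A] (q : Fin m → H → A) :
    QTree m H A → Finset H → Prop
  | leaf (h : H) (S : Finset H) : Irreducible q (.leaf h) S
  | node (S : Finset H) (i : Fin m) (ch : A → QTree m H A)
      (hsplit : ∃ s ∈ S, ∃ t ∈ S, q i s ≠ q i t)
      (hch : ∀ a : A, (S.filter fun s => q i s = a).Nonempty →
        Irreducible q (ch a) (S.filter fun s => q i s = a)) :
      Irreducible q (.node i ch) S


-- ===================== auxiliary lemmas =====================

lemma shrink_mono_aux {ι : Type*} [Fintype ι] (a b : ι → ℝ)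
    (ha : ∀ j, 0 ≤ a j) (hab : ∀ j, a j ≤ b j) (hA : 0 < ∑ j, a j) :
    (∑ j, a j) - (∑ j, (a j)^2) / (∑ j, a j) ≤
      (∑ j, b j) - (∑ j, (b j)^2) / (∑ j, b j) := by
  set A := ∑ j, a j with hAdef
  set B := ∑ j, b j with hBdef
  have hAB : A ≤ B := Finset.sum_le_sum (fun j _ => hab j)
  have hB : 0 < B := lt_of_lt_of_le hA hAB
  have hd : ∀ j, b j - a j ≤ B - A := by
    intro j
    have : ∑ k, (b k - a k) = B - A := by rw [Finset.sum_sub_distrib]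
    rw [← this]
    exact Finset.single_le_sum (f := fun k => b k - a k)
      (fun k _ => sub_nonneg.2 (hab k)) (Finset.mem_univ j)
  have hd2 : ∑ j, (b j - a j)^2 ≤ (B - A)^2 := by
    calc ∑ j, (b j - a j)^2 ≤ ∑ j, (b j - a j) * (B - A) := by
          apply Finset.sum_le_sum
          intro j _
          rw [sq]
          exact mul_le_mul_of_nonneg_left (hd j) (sub_nonneg.2 (hab j))
      _ = (B - A)^2 := by rw [← Finset.sum_mul, Finset.sum_sub_distrib, ← hAdef, ← hBdef, sq]
  have ha2 : ∀ j, (a j)^2 ≤ ∑ k, (a k)^2 := fun j =>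
    Finset.single_le_sum (fun k _ => sq_nonneg (a k)) (Finset.mem_univ j)
  have had : 2 * A * ∑ j, a j * (b j - a j) ≤ (B - A) * (A^2 + ∑ k, (a k)^2) := by
    have key : ∀ j, 2 * A * (a j * (b j - a j)) ≤ (A^2 + ∑ k, (a k)^2) * (b j - a j) := by
      intro j
      have h1 : 2 * A * a j ≤ A^2 + (a j)^2 := by nlinarith [sq_nonneg (A - a j)]
      have h2 : A^2 + (a j)^2 ≤ A^2 + ∑ k, (a k)^2 := by linarith [ha2 j]
      have hdj : 0 ≤ b j - a j := sub_nonneg.2 (hab j)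
      calc 2 * A * (a j * (b j - a j)) = (2 * A * a j) * (b j - a j) := by ring
        _ ≤ (A^2 + ∑ k, (a k)^2) * (b j - a j) :=
            mul_le_mul_of_nonneg_right (h1.trans h2) hdj
    calc 2 * A * ∑ j, a j * (b j - a j) = ∑ j, 2 * A * (a j * (b j - a j)) := by
          rw [Finset.mul_sum]
      _ ≤ ∑ j, (A^2 + ∑ k, (a k)^2) * (b j - a j) := Finset.sum_le_sum (fun j _ => key j)
      _ = (A^2 + ∑ k, (a k)^2) * (B - A) := by
          rw [← Finset.mul_sum, Finset.sum_sub_distrib, ← hAdef, ← hBdef]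
      _ = (B - A) * (A^2 + ∑ k, (a k)^2) := by ring
  have hexp : ∑ j, (b j)^2 = ∑ j, (a j)^2 + 2 * ∑ j, a j * (b j - a j) + ∑ j, (b j - a j)^2 := by
    rw [Finset.mul_sum, ← Finset.sum_add_distrib, ← Finset.sum_add_distrib]
    exact Finset.sum_congr rfl (fun j _ => by ring)
  have core : A * ∑ j, (b j)^2 - B * ∑ j, (a j)^2 ≤ (B - A) * (A * B) := by
    nlinarith [mul_le_mul_of_nonneg_left hd2 hA.le]
  have key : (∑ j, (b j)^2) / B - (∑ j, (a j)^2) / A ≤ B - A := by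
    rw [div_sub_div _ _ (ne_of_gt hB) (ne_of_gt hA), div_le_iff₀ (by positivity)]
    nlinarith [core]
  linarith

lemma mass_nonneg {π : H → ℝ} (hπ : ∀ h, 0 ≤ π h) (S : Finset H) : 0 ≤ mass π S :=
  Finset.sum_nonneg fun s _ => hπ s

lemma mass_mono {π : H → ℝ} (hπ : ∀ h, 0 ≤ π h) {R S : Finset H} (h : R ⊆ S) :
    mass π R ≤ mass π S :=
  Finset.sum_le_sum_of_subset_of_nonneg h (fun i hi _ => hπ i)

/-- The main induction. -/
lemma main_ind [Fintype A] [DecidableEq A] [DecidableEq H]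
    (q : Fin m → H → A) (c : Fin m → ℝ)
    (π : H → ℝ) (hπ : ∀ h, 0 < π h)
    (S : Finset H) (M : ℝ)
    (hbound : ∀ i : Fin m,
      mass π S - ∑ j : A, (mass π (S.filter fun s => q i s = j)) ^ 2 / mass π S ≤ c i * M)
    (T : QTree m H A) :
    ∀ R : Finset H, R ⊆ S → ValidOn q T R →
      (mass π R)^2 - ∑ h ∈ R, (π h)^2 ≤ M * ∑ h ∈ R, π h * pathCost q c T h := by
  induction T with
  | leaf h' =>
    intro R hRS hval
    have hsub : ∀ x ∈ R, x = h' := fun x hx => (hval x hx).symm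
    rcases R.eq_empty_or_nonempty with rfl | ⟨x, hx⟩
    · simp [mass]
    · have hRx : R = {x} := Finset.eq_singleton_iff_unique_mem.2
        ⟨hx, fun y hy => (hsub y hy).trans (hsub x hx).symm⟩
      subst hRx
      simp [mass, pathCost]
  | node i ch ih =>
    intro R hRS hval
    rcases R.eq_empty_or_nonempty with rfl | hR
    · simp [mass]
    have hmR : 0 < mass π R := Finset.sum_pos (fun s _ => hπ s) hR
    set a : A → ℝ := fun j => mass π (R.filter fun s => q i s = j) with hadef
    set b : A → ℝ := fun j => mass π (S.filter fun s => q i s = j) with hbdef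
    have hsa : ∑ j, a j = mass π R := Finset.sum_fiberwise R (q i) π
    have hsb : ∑ j, b j = mass π S := Finset.sum_fiberwise S (q i) π
    have hann : ∀ j, 0 ≤ a j := fun j => mass_nonneg (fun h => (hπ h).le) _
    have habj : ∀ j, a j ≤ b j := fun j =>
      mass_mono (fun h => (hπ h).le) (Finset.filter_subset_filter _ hRS)
    -- shrinkage monotonicity + hbound
    have h1 : mass π R - (∑ j, (a j)^2) / mass π R ≤ c i * M := by
      have := shrink_mono_aux a b hann habj (by rw [hsa]; exact hmR)
      rw [hsa, hsb] at this
      refine this.trans ?_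
      have := hbound i
      rwa [← Finset.sum_div] at this
    have h1' : (mass π R)^2 - ∑ j, (a j)^2 ≤ mass π R * (c i * M) := by
      have heq : mass π R * (mass π R - (∑ j, (a j)^2) / mass π R)
          = (mass π R)^2 - ∑ j, (a j)^2 := by
        field_simp
      calc (mass π R)^2 - ∑ j, (a j)^2
          = mass π R * (mass π R - (∑ j, (a j)^2) / mass π R) := heq.symm
        _ ≤ mass π R * (c i * M) := mul_le_mul_of_nonneg_left h1 hmR.le
    -- children
    have hch : ∀ j : A,
        (a j)^2 - ∑ h ∈ R.filter (fun s => q i s = j), (π h)^2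
          ≤ M * ∑ h ∈ R.filter (fun s => q i s = j), π h * pathCost q c (ch j) h := by
      intro j
      apply ih j
      · exact (Finset.filter_subset _ _).trans hRS
      · intro h hh
        have hmem := Finset.mem_filter.1 hh
        have := hval h hmem.1
        simp only [follow] at this
        rwa [hmem.2] at this
    have h2 := Finset.sum_le_sum (fun j (_ : j ∈ Finset.univ) => hch j)
    -- rewrite sums fiberwise
    have hfib2 : ∑ j : A, ∑ h ∈ R.filter (fun s => q i s = j), (π h)^2
        = ∑ h ∈ R, (π h)^2 := Finset.sum_fiberwise R (q i) _
    have hfib3 : ∑ j : A, ∑ h ∈ R.filter (fun s => q i s = j), π h * pathCost q c (ch j) h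
        = ∑ h ∈ R, π h * pathCost q c (ch (q i h)) h := by
      rw [← Finset.sum_fiberwise R (q i) (fun h => π h * pathCost q c (ch (q i h)) h)]
      apply Finset.sum_congr rfl
      intro j _
      apply Finset.sum_congr rfl
      intro h hh
      rw [(Finset.mem_filter.1 hh).2]
    have h2' : (∑ j, (a j)^2) - ∑ h ∈ R, (π h)^2
        ≤ M * ∑ h ∈ R, π h * pathCost q c (ch (q i h)) h := by
      rw [← hfib2, ← hfib3, Finset.mul_sum]
      rw [← Finset.sum_sub_distrib]
      exact h2
    -- RHS decomposition
    have hrhs : ∑ h ∈ R, π h * pathCost q c (QTree.node i ch) h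
        = c i * mass π R + ∑ h ∈ R, π h * pathCost q c (ch (q i h)) h := by
      simp only [pathCost]
      rw [mass, Finset.mul_sum, ← Finset.sum_add_distrib]
      exact Finset.sum_congr rfl (fun h _ => by ring)
    rw [hrhs, mul_add]
    have : M * (c i * mass π R) = mass π R * (c i * M) := by ring
    rw [this]
    linarith

lemma mass_restrict [DecidableEq H] {π : H → ℝ} {S S' : Finset H} (hsub : S' ⊆ S) :
    mass (restrict π S) S' = mass π S' / mass π S := by
  unfold mass restrict
  rw [Finset.sum_div]
  apply Finset.sum_congr rfl
  intro s hs
  rw [if_pos (hsub hs)]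
  rfl


/-- For any `S ⊆ H` with `|S| > 1` and any query tree `T` whose leaves
contain `S`, there exists a question `q_i` with
`Δ_i(S, π_S)/c_i ≥ (1 − CP(π_S)) / C(T, π_S)`. -/
theorem exists_good_shrink [Fintype H] [Fintype A] [DecidableEq H] [DecidableEq A]
    (π : H → ℝ) (hπpos : ∀ h, 0 < π h) (hπsum : ∑ h : H, π h = 1)
    (hH : 1 < Fintype.card H)
    (q : Fin m → H → A) (c : Fin m → ℝ) (hc : ∀ i, 0 < c i)
    (S : Finset H) (hS : 1 < S.card)
    (T : QTree m H A) (hT : ValidOn q T S) :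
    ∃ i : Fin m,
      (1 - CP (restrict π S)) / treeCost q c T (restrict π S) ≤
        shrink (q i) S (restrict π S) / c i := by
  obtain ⟨x, hx, y, hy, hxy⟩ := Finset.one_lt_card.1 hS
  -- the tree must be a node
  obtain ⟨i0, ch0, rfl⟩ : ∃ i0 ch0, T = QTree.node i0 ch0 := by
    cases T with
    | leaf h' =>
      exfalso
      have h1 : follow q (QTree.leaf h') x = x := hT x hx
      have h2 : follow q (QTree.leaf h') y = y := hT y hy
      simp only [follow] at h1 h2
      exact hxy (h1.symm.trans h2)
    | node i ch => exact ⟨i, ch, rfl⟩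
  have hSne : S.Nonempty := ⟨x, hx⟩
  set W := mass π S with hWdef
  have hW : 0 < W := Finset.sum_pos (fun s _ => hπpos s) hSne
  -- unnormalized shrinkage and its relation to shrink
  set Δ : Fin m → ℝ := fun i =>
    W - ∑ j : A, (mass π (S.filter fun s => q i s = j)) ^ 2 / W with hΔdef
  have hshrink : ∀ i : Fin m, shrink (q i) S (restrict π S) = Δ i / W := by
    intro i
    unfold shrink
    rw [mass_restrict (le_refl S), div_self hW.ne', hΔdef]
    rw [sub_div, div_self hW.ne']
    congr 1
    rw [Finset.sum_div]
    apply Finset.sum_congr rfl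
    intro j _
    rw [mass_restrict (Finset.filter_subset _ _), div_pow, div_div, sq, ← hWdef]
    ring
  -- Δ is nonnegative
  have hΔnn : ∀ i : Fin m, 0 ≤ Δ i := by
    intro i
    rw [hΔdef]
    have hsb : ∑ j : A, mass π (S.filter fun s => q i s = j) = W :=
      Finset.sum_fiberwise S (q i) π
    have : ∑ j : A, (mass π (S.filter fun s => q i s = j)) ^ 2 / W ≤ W := by
      calc ∑ j : A, (mass π (S.filter fun s => q i s = j)) ^ 2 / W
          ≤ ∑ j : A, mass π (S.filter fun s => q i s = j) := by
            apply Finset.sum_le_sum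
            intro j _
            rw [div_le_iff₀ hW, sq]
            apply mul_le_mul_of_nonneg_left _ (mass_nonneg (fun h => (hπpos h).le) _)
            exact mass_mono (fun h => (hπpos h).le) (Finset.filter_subset _ _)
        _ = W := hsb
    simp only
    linarith
  -- pick the maximizing question
  obtain ⟨i', -, hi'⟩ := Finset.exists_max_image Finset.univ
    (fun i => shrink (q i) S (restrict π S) / c i) ⟨i0, Finset.mem_univ i0⟩
  refine ⟨i', ?_⟩
  set ρ : ℝ := shrink (q i') S (restrict π S) / c i' with hρdef
  have hρnn : 0 ≤ ρ := by
    rw [hρdef, hshrink]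
    exact div_nonneg (div_nonneg (hΔnn i') hW.le) (hc i').le
  set M := W * ρ with hMdef
  have hbound : ∀ i : Fin m, Δ i ≤ c i * M := by
    intro i
    have h1 : shrink (q i) S (restrict π S) / c i ≤ ρ := hi' i (Finset.mem_univ i)
    have h2 : shrink (q i) S (restrict π S) ≤ c i * ρ := by
      rw [← div_le_iff₀' (hc i)] at *
      exact h1
    have h3 : Δ i = W * shrink (q i) S (restrict π S) := by
      rw [hshrink i, mul_div_cancel₀ _ hW.ne']
    rw [h3, hMdef]
    calc W * shrink (q i) S (restrict π S) ≤ W * (c i * ρ) :=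
          mul_le_mul_of_nonneg_left h2 hW.le
      _ = c i * (W * ρ) := by ring
  have hmain := main_ind q c π hπpos S M (fun i => hbound i) (QTree.node i0 ch0)
    S (le_refl S) hT
  -- compute CP and treeCost of the restricted distribution
  have hCP : CP (restrict π S) = (∑ h ∈ S, (π h)^2) / W^2 := by
    unfold CP restrict
    rw [Finset.sum_div, ← Finset.sum_subset (Finset.subset_univ S)
      (fun z _ hz => by rw [if_neg hz]; ring)]
    apply Finset.sum_congr rfl
    intro z hz
    rw [if_pos hz, div_pow, ← hWdef]
  have htc : treeCost q c (QTree.node i0 ch0) (restrict π S)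
      = (∑ h ∈ S, π h * pathCost q c (QTree.node i0 ch0) h) / W := by
    unfold treeCost restrict
    rw [Finset.sum_div, ← Finset.sum_subset (Finset.subset_univ S)
      (fun z _ hz => by rw [if_neg hz]; ring)]
    apply Finset.sum_congr rfl
    intro z hz
    rw [if_pos hz, ← hWdef]
    ring
  set P := ∑ h ∈ S, π h * pathCost q c (QTree.node i0 ch0) h with hPdef
  -- treeCost is positive
  have hpc : ∀ h, c i0 ≤ pathCost q c (QTree.node i0 ch0) h := by
    intro h
    have : 0 ≤ pathCost q c (ch0 (q i0 h)) h := by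
      generalize ch0 (q i0 h) = T'
      induction T' with
      | leaf h' => simp [pathCost]
      | node j ch ihh =>
        simp only [pathCost]
        have := ihh (q j h)
        linarith [(hc j).le]
    simp only [pathCost]
    linarith
  have hP : W * c i0 ≤ P := by
    rw [hPdef, hWdef, mass, Finset.sum_mul]
    exact Finset.sum_le_sum (fun h _ =>
      mul_le_mul_of_nonneg_left (hpc h) (hπpos h).le)
  have hPpos : 0 < P := lt_of_lt_of_le (mul_pos hW (hc i0)) hP
  have htcpos : 0 < treeCost q c (QTree.node i0 ch0) (restrict π S) := by
    rw [htc]; exact div_pos hPpos hW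
  rw [div_le_iff₀ htcpos, htc, hCP]
  -- from hmain : W^2 - ∑ π h ^2 ≤ M * P
  have hfinal : 1 - (∑ h ∈ S, (π h)^2) / W^2 ≤ ρ * (P / W) := by
    have hee : 1 - (∑ h ∈ S, (π h)^2) / W^2 = (W^2 - ∑ h ∈ S, (π h)^2) / W^2 := by
      field_simp
    rw [hee, div_le_iff₀ (pow_pos hW 2)]
    have heq : ρ * (P / W) * W^2 = M * P := by
      rw [hMdef]
      field_simp
    rw [heq, ← hWdef] at *
    exact hmain
  exact hfinal

end ActiveLearning
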